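/- Let δ, p, q, α be real numbers with 0<δ<1, 2≤p<q and q<α+1. Let X>0, Y≥0, A>0, m>0, and constants c′>0, K_a>0, K_b>0 be reals such that X ≥ c′·m^p, A ≤ K_a·m^{1−δ}, and let B be a real with B ≤ K_b·m^{α+1}. Define σ(t)=X·t^{p−1−α}+Y·t^{q−1−α}−A·t^{−α−δ} for t>0, let t_max be the unique critical point of σ, and set D₁ = ((α+1−p)/(α+δ))^{(α+δ)/(p−1+δ)} · ((p−1+δ)/(α+1−p)) · (c′)^{(α+δ)/(p−1+δ)} · K_a^{−(α+1−p)/(p−1+δ)}. Then for every λ>0, σ(t_max) − λ·B ≥ (D₁ − λ·K_b)·m^{α+1}. In particular, for every λ with 0<λ<D₁/K_b one has λ·B < σ(t_max). -/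

import Mathlib

open Filter Set

/-- the uniform positivity estimate
`σ(t_max) − λ·B ≥ (D₁ − λ·K_b)·m^{α+1}`, where
`D₁ = ((α+1−p)/(α+δ))^{(α+δ)/(p−1+δ)}·((p−1+δ)/(α+1−p))·
(c′)^{(α+δ)/(p−1+δ)}·K_a^{−(α+1−p)/(p−1+δ)}`, under the Sobolev/Hölder-type
hypotheses `X ≥ c′·m^p`, `A ≤ K_a·m^{1−δ}`, `B ≤ K_b·m^{α+1}`.  In
particular, `λ·B < σ(t_max)` for every `0 < λ < D₁/K_b`. -/
theorem statement5
    (δ p q α X Y A B m c' Ka Kb : ℝ)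
    (hδ0 : 0 < δ) (hδ1 : δ < 1)
    (hp : 2 ≤ p) (hpq : p < q) (hq : q < α + 1)
    (hX : 0 < X) (hY : 0 ≤ Y) (hA : 0 < A) (hm : 0 < m)
    (hc' : 0 < c') (hKa : 0 < Ka) (hKb : 0 < Kb)
    (hXm : c' * m ^ p ≤ X)
    (hAm : A ≤ Ka * m ^ (1 - δ))
    (hBm : B ≤ Kb * m ^ (α + 1))
    (σ : ℝ → ℝ)
    (hσ : ∀ t : ℝ, σ t = X * t ^ (p - 1 - α) + Y * t ^ (q - 1 - α)
        - A * t ^ (-α - δ))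
    (tmax : ℝ) (htmax : 0 < tmax)
    (heq : (α + 1 - p) * X * tmax ^ (p - 1 + δ)
        + (α + 1 - q) * Y * tmax ^ (q - 1 + δ) = (α + δ) * A)
    (D₁ : ℝ)
    (hD₁ : D₁ = ((α + 1 - p) / (α + δ)) ^ ((α + δ) / (p - 1 + δ))
        * ((p - 1 + δ) / (α + 1 - p))
        * c' ^ ((α + δ) / (p - 1 + δ))
        * Ka ^ (-(α + 1 - p) / (p - 1 + δ))) :
    (∀ lam : ℝ, 0 < lam →
      (D₁ - lam * Kb) * m ^ (α + 1) ≤ σ tmax - lam * B) ∧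
    (∀ lam : ℝ, 0 < lam → lam < D₁ / Kb → lam * B < σ tmax) := by
  have hαp : 0 < α + 1 - p := by linarith
  have hαq : 0 < α + 1 - q := by linarith
  have hs : 0 < p - 1 + δ := by linarith
  have hαδ : 0 < α + δ := by linarith
  have hq1δ : 0 < q - 1 + δ := by linarith
  set s : ℝ := p - 1 + δ with hs_def
  -- rpow product identities
  have hT1 : tmax ^ s * tmax ^ (-α - δ) = tmax ^ (p - 1 - α) := by
    rw [← Real.rpow_add htmax]; congr 1; rw [hs_def]; ring
  have hT2 : tmax ^ (q - 1 + δ) * tmax ^ (-α - δ) = tmax ^ (q - 1 - α) := by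
    rw [← Real.rpow_add htmax]; congr 1; ring
  have hT1pos : (0:ℝ) < tmax ^ (p - 1 - α) := Real.rpow_pos_of_pos htmax _
  have hT2pos : (0:ℝ) < tmax ^ (q - 1 - α) := Real.rpow_pos_of_pos htmax _
  have hT3pos : (0:ℝ) < tmax ^ (-α - δ) := Real.rpow_pos_of_pos htmax _
  have hTspos : (0:ℝ) < tmax ^ s := Real.rpow_pos_of_pos htmax _
  have hTqpos : (0:ℝ) < tmax ^ (q - 1 + δ) := Real.rpow_pos_of_pos htmax _
  -- multiply heq by tmax^(-α-δ)
  have hA3 : (α + δ) * A * tmax ^ (-α - δ)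
      = (α + 1 - p) * X * tmax ^ (p - 1 - α)
        + (α + 1 - q) * Y * tmax ^ (q - 1 - α) := by
    calc (α + δ) * A * tmax ^ (-α - δ)
        = ((α + 1 - p) * X * tmax ^ s
            + (α + 1 - q) * Y * tmax ^ (q - 1 + δ)) * tmax ^ (-α - δ) := by
          rw [heq]
      _ = (α + 1 - p) * X * (tmax ^ s * tmax ^ (-α - δ))
            + (α + 1 - q) * Y * (tmax ^ (q - 1 + δ) * tmax ^ (-α - δ)) := by ring
      _ = _ := by rw [hT1, hT2]
  have hmain : (α + δ) * σ tmax
      = (p - 1 + δ) * (X * tmax ^ (p - 1 - α))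
        + (q - 1 + δ) * (Y * tmax ^ (q - 1 - α)) := by
    rw [hσ]; linear_combination -hA3
  have hσ_lb : (p - 1 + δ) / (α + δ) * (X * tmax ^ (p - 1 - α)) ≤ σ tmax := by
    rw [div_mul_eq_mul_div, div_le_iff₀ hαδ]
    nlinarith [mul_nonneg (mul_nonneg hq1δ.le hY) hT2pos.le]
  -- upper bound on tmax
  set R : ℝ := (α + δ) * Ka / ((α + 1 - p) * c') with hR_def
  have hRpos : 0 < R := by positivity
  have hmp : (0:ℝ) < m ^ p := Real.rpow_pos_of_pos hm _
  have hm1δ : (0:ℝ) < m ^ (1 - δ) := Real.rpow_pos_of_pos hm _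
  have hkey : (α + 1 - p) * (c' * m ^ p) * tmax ^ s ≤ (α + δ) * (Ka * m ^ (1 - δ)) := by
    have h1 : (α + 1 - p) * X * tmax ^ s ≤ (α + δ) * A := by
      linarith [mul_nonneg (mul_nonneg hαq.le hY) hTqpos.le]
    have h2 : (α + 1 - p) * (c' * m ^ p) * tmax ^ s ≤ (α + 1 - p) * X * tmax ^ s :=
      mul_le_mul_of_nonneg_right (mul_le_mul_of_nonneg_left hXm hαp.le) hTspos.le
    linarith [mul_le_mul_of_nonneg_left hAm hαδ.le]
  have hTs : tmax ^ s ≤ R * m ^ (1 - δ - p) := by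
    have hRm : R * m ^ (1 - δ - p)
        = ((α + δ) * (Ka * m ^ (1 - δ))) / ((α + 1 - p) * (c' * m ^ p)) := by
      have : m ^ (1 - δ - p) = m ^ (1 - δ) * (m ^ p)⁻¹ := by
        rw [← Real.rpow_neg hm.le, ← Real.rpow_add hm]; congr 1 <;> ring
      rw [this, hR_def]
      field_simp
    rw [hRm, le_div_iff₀ (by positivity)]
    linarith [hkey, mul_comm (tmax ^ s) ((α + 1 - p) * (c' * m ^ p))]
  have hTle : tmax ≤ R ^ (1 / s) * m ^ (-1 : ℝ) := by
    have h1 : (tmax ^ s) ^ (1 / s) = tmax := by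
      rw [← Real.rpow_mul htmax.le, mul_one_div, div_self hs.ne', Real.rpow_one]
    have h2 : (tmax ^ s) ^ (1 / s) ≤ (R * m ^ (1 - δ - p)) ^ (1 / s) :=
      Real.rpow_le_rpow hTspos.le hTs (by positivity)
    have h3 : (R * m ^ (1 - δ - p)) ^ (1 / s)
        = R ^ (1 / s) * m ^ (-1 : ℝ) := by
      have hE : (1 - δ - p) * (1 / s) = -1 := by
        rw [mul_one_div, div_eq_iff hs.ne', hs_def]; ring
      rw [Real.mul_rpow hRpos.le (Real.rpow_pos_of_pos hm _).le,
        ← Real.rpow_mul hm.le, hE]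
    rw [h3, h1] at h2
    exact h2
  have hCpos : (0:ℝ) < R ^ (1 / s) * m ^ (-1 : ℝ) := by positivity
  have hexp_le : p - 1 - α ≤ 0 := by linarith
  have hT1_lb : (R ^ (1 / s) * m ^ (-1 : ℝ)) ^ (p - 1 - α) ≤ tmax ^ (p - 1 - α) :=
    Real.rpow_le_rpow_of_nonpos htmax hTle hexp_le
  -- compute the lower bound constant
  have hCval : (R ^ (1 / s) * m ^ (-1 : ℝ)) ^ (p - 1 - α)
      = R ^ ((p - 1 - α) / s) * m ^ (α + 1 - p) := by
    rw [Real.mul_rpow (by positivity) (by positivity),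
      ← Real.rpow_mul hRpos.le, ← Real.rpow_mul hm.le]
    congr 1
    · rw [one_div]; field_simp
    · ring
  have hmα1 : (0:ℝ) < m ^ (α + 1) := Real.rpow_pos_of_pos hm _
  have hmpow : m ^ p * m ^ (α + 1 - p) = m ^ (α + 1) := by
    rw [← Real.rpow_add hm]; congr 1; ring
  -- D₁ in product form
  have hD1eq : D₁ = (p - 1 + δ) / (α + δ) * c' * R ^ ((p - 1 - α) / s) := by
    have he : (p - 1 - α) / s = -((α + 1 - p) / s) := by ring_nf
    set e : ℝ := (α + 1 - p) / s with he_def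
    have hRinv : R⁻¹ = (α + 1 - p) / (α + δ) * c' * Ka⁻¹ := by
      rw [hR_def]; field_simp
    have hRe : R ^ ((p - 1 - α) / s) = (R⁻¹) ^ e := by
      rw [he, Real.rpow_neg hRpos.le, ← Real.inv_rpow hRpos.le]
    have hsplit : (R⁻¹) ^ e
        = ((α + 1 - p) / (α + δ)) ^ e * c' ^ e * (Ka⁻¹) ^ e := by
      rw [hRinv, Real.mul_rpow (by positivity) (by positivity),
        Real.mul_rpow (by positivity) (by positivity)]
    have hexp1 : (α + δ) / s = 1 + e := by
      rw [he_def, div_eq_iff hs.ne', add_mul, div_mul_cancel₀ _ hs.ne', hs_def]; ring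
    have hx1 : ((α + 1 - p) / (α + δ)) ^ ((α + δ) / s)
        = (α + 1 - p) / (α + δ) * ((α + 1 - p) / (α + δ)) ^ e := by
      rw [hexp1, Real.rpow_add (by positivity), Real.rpow_one]
    have hx2 : c' ^ ((α + δ) / s) = c' * c' ^ e := by
      rw [hexp1, Real.rpow_add hc', Real.rpow_one]
    have hx3 : Ka ^ (-(α + 1 - p) / s) = (Ka⁻¹) ^ e := by
      rw [Real.inv_rpow hKa.le, ← Real.rpow_neg hKa.le]
      congr 1; rw [he_def]; ring
    rw [hD₁, hRe, hsplit, hx1, hx2, hx3]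
    field_simp
    ring
  have hσm : D₁ * m ^ (α + 1) ≤ σ tmax := by
    have step1 : (p - 1 + δ) / (α + δ) * ((c' * m ^ p)
        * (R ^ (1 / s) * m ^ (-1 : ℝ)) ^ (p - 1 - α))
        ≤ (p - 1 + δ) / (α + δ) * (X * tmax ^ (p - 1 - α)) := by
      apply mul_le_mul_of_nonneg_left _ (by positivity)
      have h1 : c' * m ^ p * (R ^ (1 / s) * m ^ (-1 : ℝ)) ^ (p - 1 - α)
          ≤ X * (R ^ (1 / s) * m ^ (-1 : ℝ)) ^ (p - 1 - α) :=
        mul_le_mul_of_nonneg_right hXm (by positivity)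
      have h2 : X * (R ^ (1 / s) * m ^ (-1 : ℝ)) ^ (p - 1 - α)
          ≤ X * tmax ^ (p - 1 - α) :=
        mul_le_mul_of_nonneg_left hT1_lb hX.le
      linarith
    have heqv : (p - 1 + δ) / (α + δ) * ((c' * m ^ p)
        * (R ^ (1 / s) * m ^ (-1 : ℝ)) ^ (p - 1 - α)) = D₁ * m ^ (α + 1) := by
      rw [hCval, hD1eq, ← hmpow]; ring
    linarith [hσ_lb]
  constructor
  · intro lam hlam
    have hB' : lam * B ≤ lam * (Kb * m ^ (α + 1)) :=
      mul_le_mul_of_nonneg_left hBm hlam.le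
    have e1 : (D₁ - lam * Kb) * m ^ (α + 1)
        = D₁ * m ^ (α + 1) - lam * (Kb * m ^ (α + 1)) := by ring
    linarith only [hσm, hB', e1]
  · intro lam hlam hlam2
    have hB' : lam * B ≤ lam * (Kb * m ^ (α + 1)) :=
      mul_le_mul_of_nonneg_left hBm hlam.le
    have hD : lam * Kb < D₁ := (lt_div_iff₀ hKb).mp hlam2
    have e2 : lam * Kb * m ^ (α + 1) = lam * (Kb * m ^ (α + 1)) := by ring
    linarith only [hB', hσm, mul_lt_mul_of_pos_right hD hmα1, e2]
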